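/- arXiv:2601.22366 — 3 statements merged into one kernel-verified Lean document; each statement's English description precedes it below -/
import Mathlib

section
/- Let H be a complex Hilbert space and C a bounded selfadjoint operator on H. Among all closed subspaces N of H satisfying ⟨C f, f⟩ > 0 for every nonzero f ∈ N, the spectral subspace H₊ = range E((0,∞)) has maximal Hilbert-space dimension: for any such N, dim N ≤ dim H₊. -/
open ContinuousLinearMap Cardinal

local notation "⟪" x ", " y "⟫" => @inner ℂ _ _ x y

section Aux

variable {X Y : Type u} [NormedAddCommGroup X] [InnerProductSpace ℂ X] [CompleteSpace X]
  [NormedAddCommGroup Y] [InnerProductSpace ℂ Y] [CompleteSpace Y]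

/-- If there is an injective continuous linear map between Hilbert spaces, then there is a
linear isometry. -/
theorem exists_linearIsometry_of_injective (T : X →L[ℂ] Y) (hT : Function.Injective T) :
    Nonempty (X →ₗᵢ[ℂ] Y) := by
  obtain ⟨wX, b, -⟩ := exists_hilbertBasis ℂ X
  obtain ⟨wY, c, -⟩ := exists_hilbertBasis ℂ Y
  suffices h : Nonempty (wX ↪ wY) by
    obtain ⟨j⟩ := h
    have hu : Orthonormal ℂ ((c : wY → Y) ∘ j) := c.orthonormal.comp j j.injective
    exact ⟨(hu.orthogonalFamily.linearIsometry).comp b.repr.toLinearIsometry⟩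
  rw [← Cardinal.le_def]
  -- Fact 1: for each `i`, some `c k` is not orthogonal to `T (b i)`.
  have fact1 : ∀ i : wX, ∃ k : wY, ⟪(c k : Y), T (b i)⟫ ≠ 0 := by
    intro i
    by_contra hcon
    push_neg at hcon
    have hmem : T (b i) ∈ (Submodule.span ℂ (Set.range (c : wY → Y)))ᗮ := by
      rw [Submodule.mem_orthogonal]
      intro u hu
      induction hu using Submodule.span_induction with
      | mem x hx => obtain ⟨k, rfl⟩ := hx; exact hcon k
      | zero => simp
      | add x y _ _ hx hy => rw [inner_add_left, hx, hy, add_zero]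
      | smul a x _ hx => rw [inner_smul_left, hx, mul_zero]
    rw [Submodule.topologicalClosure_eq_top_iff.mp c.dense_span] at hmem
    have : b i = 0 := hT (by simpa using hmem)
    exact b.orthonormal.ne_zero i this
  -- Fact 2: for each `k`, only countably many `i` have `⟪c k, T (b i)⟫ ≠ 0`.
  have fact2 : ∀ k : wY, {i : wX | ⟪(c k : Y), T (b i)⟫ ≠ 0}.Countable := by
    intro k
    set x : X := ContinuousLinearMap.adjoint T (c k) with hx
    have hsum : Summable fun i : wX => ‖(b.repr x : ∀ _ : wX, ℂ) i‖ ^ (2 : ENNReal).toReal :=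
      (lp.memℓp (b.repr x)).summable (by norm_num)
    have hcnt : {i : wX | (b.repr x : ∀ _ : wX, ℂ) i ≠ 0}.Countable := by
      refine hsum.countable_support.mono ?_
      intro i hi
      simp only [Set.mem_setOf_eq] at hi
      have hpos : (0:ℝ) < ‖(b.repr x : ∀ _ : wX, ℂ) i‖ := norm_pos_iff.mpr hi
      exact Function.mem_support.mpr (Real.rpow_pos_of_pos hpos _).ne'
    refine hcnt.mono ?_
    intro i hi
    simp only [Set.mem_setOf_eq] at hi ⊢
    rw [b.repr_apply_apply, hx, ContinuousLinearMap.adjoint_inner_right]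
    intro h0
    exact hi (by rw [← inner_conj_symm, h0, map_zero])
  -- choose a function with countable fibers
  choose F hF using fact1
  have hfib : ∀ k : wY, (#(F ⁻¹' {k}) : Cardinal) ≤ Cardinal.aleph0 := by
    intro k
    have : (F ⁻¹' {k}) ⊆ {i : wX | ⟪(c k : Y), T (b i)⟫ ≠ 0} := by
      intro i hi
      rw [Set.mem_preimage, Set.mem_singleton_iff] at hi
      simpa [hi] using hF i
    exact ((fact2 k).mono this).le_aleph0
  have hmain : (#wX : Cardinal) ≤ #wY * Cardinal.aleph0 :=
    Cardinal.mk_le_mk_mul_of_mk_preimage_le F hfib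
  cases finite_or_infinite wY with
  | inr hinf =>
    rwa [Cardinal.mul_eq_left (Cardinal.aleph0_le_mk wY) (Cardinal.aleph0_le_mk wY) Cardinal.aleph0_ne_zero] at hmain
  | inl hfin =>
    haveI : Fintype wY := Fintype.ofFinite wY
    haveI : FiniteDimensional ℂ Y := Module.Finite.of_basis c.toOrthonormalBasis.toBasis
    calc (#wX : Cardinal) ≤ Module.rank ℂ X :=
          b.orthonormal.linearIndependent.cardinal_le_rank
      _ ≤ Module.rank ℂ Y := LinearMap.rank_le_of_injective (T : X →ₗ[ℂ] Y) hT
      _ = #wY := c.toOrthonormalBasis.toBasis.mk_eq_rank''.symm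

end Aux

/-- With `P` the spectral projection `E((0,∞))` of the bounded selfadjoint
operator `C` (encoded by its characteristic properties), the spectral subspace
`H₊ = ran P` has maximal Hilbert dimension among closed `C`-strictly positive subspaces:
for any such `N`, `dim N ≤ dim H₊`, expressed by the existence of a linear isometry of
`N` into `H₊`. -/
theorem stmt1 {H : Type*} [NormedAddCommGroup H] [InnerProductSpace ℂ H] [CompleteSpace H]
    (C : H →L[ℂ] H) (hC : IsSelfAdjoint C)
    (P : H →L[ℂ] H) (hPsa : IsSelfAdjoint P) (hPidem : P ∘L P = P)
    (hPC : C ∘L P = P ∘L C)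
    (hpos : ∀ f ∈ LinearMap.range (P : H →ₗ[ℂ] H), f ≠ 0 → 0 < (⟪C f, f⟫).re)
    (hker : ∀ f : H, P f = 0 → (⟪C f, f⟫).re ≤ 0)
    (N : Submodule ℂ H) (hNcl : IsClosed (N : Set H))
    (hN : ∀ f ∈ N, f ≠ 0 → 0 < (⟪C f, f⟫).re) :
    Nonempty (N →ₗᵢ[ℂ] LinearMap.range (P : H →ₗ[ℂ] H)) := by
  haveI : CompleteSpace N := hNcl.completeSpace_coe
  have hrange : (LinearMap.range (P : H →ₗ[ℂ] H) : Submodule ℂ H) =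
      LinearMap.ker ((ContinuousLinearMap.id ℂ H - P : H →L[ℂ] H) : H →ₗ[ℂ] H) := by
    ext x
    constructor
    · rintro ⟨y, rfl⟩
      have : P (P y) = P y := by rw [← ContinuousLinearMap.comp_apply, hPidem]
      simp [LinearMap.mem_ker, this]
    · intro hx
      rw [LinearMap.mem_ker] at hx
      have : x - P x = 0 := by simpa using hx
      exact ⟨x, (sub_eq_zero.mp this).symm⟩
  have hcl : IsClosed ((LinearMap.range (P : H →ₗ[ℂ] H) : Submodule ℂ H) : Set H) := by
    rw [hrange]
    exact ContinuousLinearMap.isClosed_ker _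
  haveI : CompleteSpace (LinearMap.range (P : H →ₗ[ℂ] H)) := hcl.completeSpace_coe
  set T : N →L[ℂ] LinearMap.range (P : H →ₗ[ℂ] H) :=
    (P.comp N.subtypeL).codRestrict (LinearMap.range (P : H →ₗ[ℂ] H))
      (fun x => LinearMap.mem_range_self _ _) with hT
  have hTinj : Function.Injective T := by
    have hz : ∀ z : N, T z = 0 → z = 0 := by
      intro z hz
      have hPz : P (z : H) = 0 := by
        have := congrArg (Subtype.val) hz
        exact this
      by_contra hz0
      have hz0' : (z : H) ≠ 0 := fun h => hz0 (Subtype.ext h)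
      have h1 := hN (z : H) z.2 hz0'
      have h2 := hker (z : H) hPz
      linarith
    intro x y hxy
    have : x - y = 0 := hz (x - y) (by rw [map_sub, hxy, sub_self])
    exact sub_eq_zero.mp this
  exact exists_linearIsometry_of_injective T hTinj
end

section
/- Let H be a complex Hilbert space, C ∈ L(H) selfadjoint, M₊, M₋, M₀ subspaces satisfying: H = M₊ + M₋ + M₀ with M± closed C-strictly positive/negative, M₀ = ker C, each pairwise sum closed, and pairwise C-orthogonality. Then there exist bounded projections Q₊, Q₋, Q₀ ∈ L(H) with ran Q₊ = M₊, ker Q₊ = M₋ + M₀; ran Q₋ = M₋, ker Q₋ = M₊ + M₀; ran Q₀ = M₀, ker Q₀ = M₊ + M₋. -/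
open ContinuousLinearMap

local notation "⟪" x ", " y "⟫" => @inner ℂ _ _ x y

lemma aux_proj18 {H : Type*} [NormedAddCommGroup H] [NormedSpace ℂ H] [CompleteSpace H]
    (p q : Submodule ℂ H) (h : IsCompl p q) (hp : IsClosed (p : Set H))
    (hq : IsClosed (q : Set H)) :
    ∃ Q : H →L[ℂ] H, Q ∘L Q = Q ∧ LinearMap.range (Q : H →ₗ[ℂ] H) = p ∧ LinearMap.ker (Q : H →ₗ[ℂ] H) = q := by
  refine ⟨p.subtypeL ∘L p.linearProjOfClosedCompl q h hp hq, ?_, ?_, ?_⟩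
  · ext x
    simp [Submodule.coe_continuous_linearProjOfClosedCompl',
      Submodule.linearProjOfIsCompl_apply_left h]
  · apply le_antisymm
    · rintro _ ⟨x, rfl⟩
      simp only [ContinuousLinearMap.coe_coe, coe_comp', Function.comp_apply, Submodule.coe_subtypeL',
        Submodule.coe_subtype]
      exact Submodule.coe_mem _
    · intro x hx
      exact ⟨x, by simp [Submodule.coe_continuous_linearProjOfClosedCompl',
        Submodule.linearProjOfIsCompl_apply_left h ⟨x, hx⟩]⟩
  · ext x
    simp only [LinearMap.mem_ker, ContinuousLinearMap.coe_coe, coe_comp', Function.comp_apply,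
      Submodule.coe_subtypeL', Submodule.coe_subtype,
      Submodule.coe_continuous_linearProjOfClosedCompl',
      ZeroMemClass.coe_eq_zero]
    exact Submodule.linearProjOfIsCompl_apply_eq_zero_iff h

/-- If `H = M₊ + M₋ + M₀` with `M₊, M₋` closed and `C`-strictly
positive/negative, `M₀ = ker C`, each pairwise sum closed, and the subspaces pairwise
`C`-orthogonal, then there exist bounded projections `Q₊, Q₋, Q₀` with
`ran Q₊ = M₊, ker Q₊ = M₋ + M₀`; `ran Q₋ = M₋, ker Q₋ = M₊ + M₀`;
`ran Q₀ = M₀, ker Q₀ = M₊ + M₋`. -/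
theorem stmt18 {H : Type*} [NormedAddCommGroup H] [InnerProductSpace ℂ H] [CompleteSpace H]
    (C : H →L[ℂ] H) (hC : IsSelfAdjoint C)
    (Mp Mm M0 : Submodule ℂ H)
    (hMpcl : IsClosed (Mp : Set H)) (hMmcl : IsClosed (Mm : Set H))
    (hspan : ∀ h : H, ∃ fp ∈ Mp, ∃ fm ∈ Mm, ∃ f0 ∈ M0, h = fp + fm + f0)
    (hpos : ∀ f ∈ Mp, f ≠ 0 → 0 < (⟪C f, f⟫).re)
    (hneg : ∀ f ∈ Mm, f ≠ 0 → (⟪C f, f⟫).re < 0)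
    (hker : M0 = LinearMap.ker (C : H →ₗ[ℂ] H))
    (hclpm : IsClosed ((Mp ⊔ Mm : Submodule ℂ H) : Set H))
    (hclp0 : IsClosed ((Mp ⊔ M0 : Submodule ℂ H) : Set H))
    (hclm0 : IsClosed ((Mm ⊔ M0 : Submodule ℂ H) : Set H))
    (hpm : ∀ f ∈ Mp, ∀ g ∈ Mm, ⟪C f, g⟫ = 0)
    (hp0 : ∀ f ∈ Mp, ∀ g ∈ M0, ⟪C f, g⟫ = 0)
    (hm0 : ∀ f ∈ Mm, ∀ g ∈ M0, ⟪C f, g⟫ = 0) :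
    ∃ Qp Qm Q0 : H →L[ℂ] H,
      Qp ∘L Qp = Qp ∧ Qm ∘L Qm = Qm ∧ Q0 ∘L Q0 = Q0 ∧
      LinearMap.range (Qp : H →ₗ[ℂ] H) = Mp ∧ LinearMap.ker (Qp : H →ₗ[ℂ] H) = Mm ⊔ M0 ∧
      LinearMap.range (Qm : H →ₗ[ℂ] H) = Mm ∧ LinearMap.ker (Qm : H →ₗ[ℂ] H) = Mp ⊔ M0 ∧
      LinearMap.range (Q0 : H →ₗ[ℂ] H) = M0 ∧ LinearMap.ker (Q0 : H →ₗ[ℂ] H) = Mp ⊔ Mm := by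
  -- reversed orthogonality relations via selfadjointness
  have hsym := hC.isSymmetric
  have hmp : ∀ f ∈ Mm, ∀ g ∈ Mp, ⟪C f, g⟫ = 0 := by
    intro f hf g hg
    have : ⟪C f, g⟫ = ⟪f, C g⟫ := hsym f g
    rw [this, ← inner_conj_symm, hpm g hg f hf, map_zero]
  have h0p : ∀ f ∈ M0, ∀ g ∈ Mp, ⟪C f, g⟫ = 0 := by
    intro f hf g hg
    have : ⟪C f, g⟫ = ⟪f, C g⟫ := hsym f g
    rw [this, ← inner_conj_symm, hp0 g hg f hf, map_zero]
  have h0m : ∀ f ∈ M0, ∀ g ∈ Mm, ⟪C f, g⟫ = 0 := by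
    intro f hf g hg
    have : ⟪C f, g⟫ = ⟪f, C g⟫ := hsym f g
    rw [this, ← inner_conj_symm, hm0 g hg f hf, map_zero]
  have hM0cl : IsClosed (M0 : Set H) := by
    rw [hker]; exact isClosed_ker C
  -- the full span
  have htop : Mp ⊔ Mm ⊔ M0 = ⊤ := by
    rw [eq_top_iff]
    intro x _
    obtain ⟨fp, hfp, fm, hfm, f0, hf0, rfl⟩ := hspan x
    exact Submodule.add_mem _ (Submodule.add_mem _
      (Submodule.mem_sup_left (Submodule.mem_sup_left hfp))
      (Submodule.mem_sup_left (Submodule.mem_sup_right hfm)))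
      (Submodule.mem_sup_right hf0)
  -- the three IsCompl statements
  have hcomplP : IsCompl Mp (Mm ⊔ M0) := by
    constructor
    · rw [Submodule.disjoint_def]
      intro x hx hx'
      obtain ⟨g, hg, h, hh, rfl⟩ := Submodule.mem_sup.1 hx'
      by_contra hne
      have h1 : ⟪C (g + h), g + h⟫ = 0 := by
        rw [inner_add_right, hpm _ hx _ hg, hp0 _ hx _ hh, add_zero]
      have := hpos _ hx hne
      rw [h1] at this
      simp at this
    · rw [codisjoint_iff, show Mp ⊔ (Mm ⊔ M0) = Mp ⊔ Mm ⊔ M0 from by ac_rfl]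
      exact htop
  have hcomplM : IsCompl Mm (Mp ⊔ M0) := by
    constructor
    · rw [Submodule.disjoint_def]
      intro x hx hx'
      obtain ⟨g, hg, h, hh, rfl⟩ := Submodule.mem_sup.1 hx'
      by_contra hne
      have h1 : ⟪C (g + h), g + h⟫ = 0 := by
        rw [inner_add_right, hmp _ hx _ hg, hm0 _ hx _ hh, add_zero]
      have := hneg _ hx hne
      rw [h1] at this
      simp at this
    · rw [codisjoint_iff, show Mm ⊔ (Mp ⊔ M0) = Mp ⊔ Mm ⊔ M0 from by ac_rfl]
      exact htop
  have hcompl0 : IsCompl M0 (Mp ⊔ Mm) := by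
    constructor
    · rw [Submodule.disjoint_def]
      intro x hx hx'
      obtain ⟨g, hg, h, hh, hxe⟩ := Submodule.mem_sup.1 hx'
      have hCx : C x = 0 := by
        have := hker ▸ hx
        exact LinearMap.mem_ker.1 this
      have hxg : ⟪C g, x⟫ = 0 := hp0 _ hg _ hx
      have hxh : ⟪C h, x⟫ = 0 := hm0 _ hh _ hx
      have hg0 : g = 0 := by
        by_contra hne
        have h1 : ⟪C g, g⟫ = 0 := by
          have : ⟪C g, g⟫ = ⟪C g, x⟫ - ⟪C g, h⟫ := by
            rw [← hxe]; rw [inner_add_right]; ring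
          rw [this, hxg, hpm _ hg _ hh, sub_zero]
        have := hpos _ hg hne
        rw [h1] at this
        simp at this
      have hh0 : h = 0 := by
        by_contra hne
        have h1 : ⟪C h, h⟫ = 0 := by
          have : ⟪C h, h⟫ = ⟪C h, x⟫ - ⟪C h, g⟫ := by
            rw [← hxe]; rw [inner_add_right]; ring
          rw [this, hxh, hmp _ hh _ hg, sub_zero]
        have := hneg _ hh hne
        rw [h1] at this
        simp at this
      rw [← hxe, hg0, hh0, add_zero]
    · rw [codisjoint_iff, show M0 ⊔ (Mp ⊔ Mm) = Mp ⊔ Mm ⊔ M0 from by ac_rfl]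
      exact htop
  obtain ⟨Qp, hQp1, hQp2, hQp3⟩ := aux_proj18 Mp (Mm ⊔ M0) hcomplP hMpcl hclm0
  obtain ⟨Qm, hQm1, hQm2, hQm3⟩ := aux_proj18 Mm (Mp ⊔ M0) hcomplM hMmcl hclp0
  obtain ⟨Q0, hQ01, hQ02, hQ03⟩ := aux_proj18 M0 (Mp ⊔ Mm) hcompl0 hM0cl hclpm
  exact ⟨Qp, Qm, Q0, hQp1, hQm1, hQ01, hQp2, hQp3, hQm2, hQm3, hQ02, hQ03⟩
end

section
/- Let H, K be complex Hilbert spaces, D ∈ L(K) selfadjoint, Y ∈ L(K,H) boundedly invertible, and define C = (Y⁻¹)* D Y⁻¹ (equivalently D = Y* C Y), so C is selfadjoint on H. Let K₊, K₋, K₀ be the spectral subspaces of D for (0,∞), (−∞,0), {0}. Then the images M₊ = Y K₊, M₋ = Y K₋, M₀ = Y K₀ are closed, satisfy H = M₊ + M₋ + M₀ with the sum direct, M₀ = ker C, M₊ is C-strictly positive, M₋ is C-strictly negative, and the three subspaces are pairwise C-orthogonal. -/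
open ContinuousLinearMap

local notation "⟪" x ", " y "⟫" => @inner ℂ _ _ x y

/-- Let `D` be bounded selfadjoint on `K`, `Y : K → H` boundedly invertible,
and `C = (Y⁻¹)* D Y⁻¹` (so `D = Y* C Y`).  If `K₊, K₋, K₀` are the spectral subspaces of
`D` for `(0,∞)`, `(−∞,0)`, `{0}` (encoded by their characteristic properties), then the
images `M₊ = Y K₊`, `M₋ = Y K₋`, `M₀ = Y K₀` are closed, `H = M₊ + M₋ + M₀` with the sum
direct, `M₀ = ker C`, `M₊` is `C`-strictly positive, `M₋` is `C`-strictly negative, and the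
three subspaces are pairwise `C`-orthogonal. -/
theorem stmt19 {H K : Type*}
    [NormedAddCommGroup H] [InnerProductSpace ℂ H] [CompleteSpace H]
    [NormedAddCommGroup K] [InnerProductSpace ℂ K] [CompleteSpace K]
    (D : K →L[ℂ] K) (hD : IsSelfAdjoint D)
    (Y : K ≃L[ℂ] H) (C : H →L[ℂ] H)
    (hCdef : C = (ContinuousLinearMap.adjoint ((Y.symm : H →L[ℂ] K))) ∘L D ∘L
      (Y.symm : H →L[ℂ] K))
    (Kp Km K0 : Submodule ℂ K)
    (hKpcl : IsClosed (Kp : Set K)) (hKmcl : IsClosed (Km : Set K))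
    (hKorth1 : ∀ f ∈ Kp, ∀ g ∈ Km, ⟪f, g⟫ = 0)
    (hKorth2 : ∀ f ∈ Kp, ∀ g ∈ K0, ⟪f, g⟫ = 0)
    (hKorth3 : ∀ f ∈ Km, ∀ g ∈ K0, ⟪f, g⟫ = 0)
    (hKspan : ∀ k : K, ∃ a ∈ Kp, ∃ b ∈ Km, ∃ c ∈ K0, k = a + b + c)
    (hKinv1 : ∀ f ∈ Kp, D f ∈ Kp) (hKinv2 : ∀ f ∈ Km, D f ∈ Km)
    (hK0 : K0 = LinearMap.ker (D : K →ₗ[ℂ] K))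
    (hKpos : ∀ f ∈ Kp, f ≠ 0 → 0 < (⟪D f, f⟫).re)
    (hKneg : ∀ f ∈ Km, f ≠ 0 → (⟪D f, f⟫).re < 0) :
    let Mp : Submodule ℂ H := Kp.map ((Y : K →L[ℂ] H) : K →ₗ[ℂ] H)
    let Mm : Submodule ℂ H := Km.map ((Y : K →L[ℂ] H) : K →ₗ[ℂ] H)
    let M0 : Submodule ℂ H := K0.map ((Y : K →L[ℂ] H) : K →ₗ[ℂ] H)
    IsClosed (Mp : Set H) ∧ IsClosed (Mm : Set H) ∧ IsClosed (M0 : Set H) ∧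
      (∀ h : H, ∃ a ∈ Mp, ∃ b ∈ Mm, ∃ c ∈ M0, h = a + b + c) ∧
      (∀ a ∈ Mp, ∀ b ∈ Mm, ∀ c ∈ M0, a + b + c = 0 → a = 0 ∧ b = 0 ∧ c = 0) ∧
      M0 = LinearMap.ker (C : H →ₗ[ℂ] H) ∧
      (∀ f ∈ Mp, f ≠ 0 → 0 < (⟪C f, f⟫).re) ∧
      (∀ f ∈ Mm, f ≠ 0 → (⟪C f, f⟫).re < 0) ∧
      (∀ f ∈ Mp, ∀ g ∈ Mm, ⟪C f, g⟫ = 0) ∧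
      (∀ f ∈ Mp, ∀ g ∈ M0, ⟪C f, g⟫ = 0) ∧
      (∀ f ∈ Mm, ∀ g ∈ M0, ⟪C f, g⟫ = 0) := by
  intro Mp Mm M0
  -- key congruence identity
  have key : ∀ f g : K, ⟪C (Y f), Y g⟫ = ⟪D f, g⟫ := by
    intro f g
    have h1 : C (Y f) = (ContinuousLinearMap.adjoint ((Y.symm : H →L[ℂ] K))) (D f) := by
      simp [hCdef]
    rw [h1, ContinuousLinearMap.adjoint_inner_left]
    simp
  have closed : ∀ (S : Submodule ℂ K), IsClosed (S : Set K) →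
      IsClosed ((S.map ((Y : K →L[ℂ] H) : K →ₗ[ℂ] H) : Submodule ℂ H) : Set H) := by
    intro S hS
    have : ((S.map ((Y : K →L[ℂ] H) : K →ₗ[ℂ] H) : Submodule ℂ H) : Set H) = Y '' (S : Set K) := by
      ext x; simp [Submodule.mem_map]
    rw [this]
    exact Y.toHomeomorph.isClosedMap _ hS
  have hK0cl : IsClosed (K0 : Set K) := by
    rw [hK0]; exact ContinuousLinearMap.isClosed_ker D
  refine ⟨closed Kp hKpcl, closed Km hKmcl, closed K0 hK0cl, ?_, ?_, ?_, ?_, ?_, ?_, ?_, ?_⟩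
  · -- span
    intro h
    obtain ⟨a, ha, b, hb, c, hc, hsum⟩ := hKspan (Y.symm h)
    refine ⟨Y a, ⟨a, ha, rfl⟩, Y b, ⟨b, hb, rfl⟩, Y c, ⟨c, hc, rfl⟩, ?_⟩
    have := congrArg Y hsum
    simpa using this
  · -- directness
    rintro _ ⟨a, ha, rfl⟩ _ ⟨b, hb, rfl⟩ _ ⟨c, hc, rfl⟩ hsum
    have hsum' : a + b + c = 0 := by
      apply Y.injective
      simpa using hsum
    have hab : ⟪a, b⟫ = 0 := hKorth1 a ha b hb
    have hac : ⟪a, c⟫ = 0 := hKorth2 a ha c hc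
    have hbc : ⟪b, c⟫ = 0 := hKorth3 b hb c hc
    have hba : ⟪b, a⟫ = 0 := by rwa [inner_eq_zero_symm] at hab
    have hca : ⟪c, a⟫ = 0 := by rwa [inner_eq_zero_symm] at hac
    have hcb : ⟪c, b⟫ = 0 := by rwa [inner_eq_zero_symm] at hbc
    have ha0 : a = 0 := by
      have : ⟪a, a⟫ = 0 := by
        have := congrArg (fun x => ⟪a, x⟫) hsum'
        simpa [inner_add_right, hab, hac] using this
      exact inner_self_eq_zero.mp this
    have hb0 : b = 0 := by
      have : ⟪b, b⟫ = 0 := by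
        have := congrArg (fun x => ⟪b, x⟫) hsum'
        simpa [inner_add_right, hba, hbc] using this
      exact inner_self_eq_zero.mp this
    have hc0 : c = 0 := by
      have : ⟪c, c⟫ = 0 := by
        have := congrArg (fun x => ⟪c, x⟫) hsum'
        simpa [inner_add_right, hca, hcb] using this
      exact inner_self_eq_zero.mp this
    exact ⟨by simp [ha0], by simp [hb0], by simp [hc0]⟩
  · -- M0 = ker C
    ext x
    simp only [Submodule.mem_map, LinearMap.mem_ker]
    constructor
    · rintro ⟨f, hf, rfl⟩
      show C (Y f) = 0
      rw [hK0] at hf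
      replace hf : D f = 0 := hf
      have : ∀ g : K, ⟪C (Y f), Y g⟫ = 0 := by
        intro g; rw [key]; simp [hf]
      have h2 : ⟪C (Y f), C (Y f)⟫ = 0 := by
        have := this (Y.symm (C (Y f)))
        simpa using this
      exact inner_self_eq_zero.mp h2
    · intro hx
      refine ⟨Y.symm x, ?_, by simp⟩
      rw [hK0]
      show D (Y.symm x) = 0
      have : ∀ g : K, ⟪D (Y.symm x), g⟫ = 0 := by
        intro g
        have := key (Y.symm x) g
        simp only [ContinuousLinearEquiv.apply_symm_apply] at this
        rw [← this, (show C x = 0 from hx)]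
        simp
      exact inner_self_eq_zero.mp (this _)
  · -- positivity
    rintro _ ⟨f, hf, rfl⟩ hne
    have hf0 : f ≠ 0 := fun h => hne (by simp [h])
    show 0 < (⟪C (Y f), Y f⟫).re
    rw [key f f]
    exact hKpos f hf hf0
  · -- negativity
    rintro _ ⟨f, hf, rfl⟩ hne
    have hf0 : f ≠ 0 := fun h => hne (by simp [h])
    show (⟪C (Y f), Y f⟫).re < 0
    rw [key f f]
    exact hKneg f hf hf0
  · rintro _ ⟨f, hf, rfl⟩ _ ⟨g, hg, rfl⟩
    show ⟪C (Y f), Y g⟫ = 0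
    rw [key]; exact hKorth1 (D f) (hKinv1 f hf) g hg
  · rintro _ ⟨f, hf, rfl⟩ _ ⟨g, hg, rfl⟩
    show ⟪C (Y f), Y g⟫ = 0
    rw [key]; exact hKorth2 (D f) (hKinv1 f hf) g hg
  · rintro _ ⟨f, hf, rfl⟩ _ ⟨g, hg, rfl⟩
    show ⟪C (Y f), Y g⟫ = 0
    rw [key]; exact hKorth3 (D f) (hKinv2 f hf) g hg
end
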